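/- Let θ ∈ (0,1), r > 0, 0 < ρ ≤ r/2, and ε ≥ 0. Let c be a nonnegative real-valued family indexed by finitely supported functions a : ℤ → ℕ, satisfying 0 ≤ c_a ≤ ε·exp( 2ρ·∑_{n∈ℤ} a_n·w(n)^θ ) for every a, and let I : ℤ → ℝ satisfy 0 ≤ I_n ≤ exp(−2r·w(n)^θ) for all n ∈ ℤ. Then the sum (in [0,∞]) over all finitely supported a : ℤ → ℕ of c_a·∏_{n∈ℤ} I_n^{a_n} is at most ε·∏_{n∈ℤ} (1 − exp(−r·w(n)^θ))^{−1}, and this infinite product is finite (it converges since ∑_{n∈ℤ} exp(−r·w(n)^θ) < ∞). -/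

import Mathlib

open scoped BigOperators ENNReal

/-- `w(n) = max(1, |n|)` as a real number. -/
noncomputable def wR (n : ℤ) : ℝ := max 1 |(n : ℝ)|

lemma wR_one_le (n : ℤ) : 1 ≤ wR n := le_max_left _ _

lemma wR_neg (n : ℤ) : wR (-n) = wR n := by simp [wR]

lemma wR_natCast (n : ℕ) : wR (n + 1 : ℕ) = (n + 1 : ℝ) := by
  have : (0:ℝ) ≤ (n:ℝ) + 1 := by positivity
  simp [wR, abs_of_nonneg this]

-- summability of exp(-r * wR n ^ θ)
lemma summable_q {r θ : ℝ} (hr : 0 < r) (hθ : 0 < θ) :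
    Summable (fun n : ℤ => Real.exp (-r * wR n ^ θ)) := by
  set k : ℕ := ⌈2 / θ⌉₊ with hk
  have hk2 : 2 ≤ (k : ℝ) * θ := by
    have := Nat.le_ceil (2 / θ)
    rw [div_le_iff₀ hθ] at this
    linarith
  set C : ℝ := k.factorial / r ^ k with hC
  have hCpos : 0 < C := by positivity
  have key : ∀ x : ℝ, 1 ≤ x → Real.exp (-r * x ^ θ) ≤ C * ((x ^ (2:ℕ))⁻¹) := by
    intro x hx
    have hx0 : (0:ℝ) < x := lt_of_lt_of_le one_pos hx
    have hxt : (1:ℝ) ≤ x ^ θ := Real.one_le_rpow hx hθ.le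
    have hxt0 : (0:ℝ) < x ^ θ := lt_of_lt_of_le one_pos hxt
    -- (r x^θ)^k / k! ≤ exp (r x^θ)
    have h1 : (r * x ^ θ) ^ k / k.factorial ≤ Real.exp (r * x ^ θ) := by
      have hs := Real.sum_le_exp_of_nonneg (by positivity : (0:ℝ) ≤ r * x ^ θ) (k + 1)
      refine le_trans ?_ hs
      exact Finset.single_le_sum (f := fun i => (r * x ^ θ) ^ i / i.factorial)
        (fun i _ => by positivity) (Finset.self_mem_range_succ k)
    have h2 : (x:ℝ) ^ (2:ℕ) ≤ (x ^ θ) ^ k := by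
      have : (x ^ θ) ^ k = x ^ (θ * k) := by
        rw [← Real.rpow_natCast (x ^ θ) k, ← Real.rpow_mul hx0.le]
      rw [this, ← Real.rpow_natCast x 2]
      exact Real.rpow_le_rpow_of_exponent_le hx (by push_cast; linarith)
    rw [neg_mul, Real.exp_neg]
    have h4 : (Real.exp (r * x ^ θ))⁻¹ ≤ ((r * x ^ θ) ^ k / k.factorial)⁻¹ :=
      inv_anti₀ (by positivity) h1
    refine h4.trans ?_
    rw [inv_div, mul_pow, hC, div_mul_eq_div_div, ← div_eq_mul_inv]
    exact div_le_div_of_nonneg_left (by positivity) (by positivity) h2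
  -- now summability over ℤ
  have hnat : Summable (fun n : ℕ => Real.exp (-r * wR (n : ℤ) ^ θ)) := by
    rw [← summable_nat_add_iff 1]
    have hs : Summable (fun n : ℕ => C * (((n + 1 : ℝ)) ^ (2:ℕ))⁻¹) := by
      apply Summable.mul_left
      have base : Summable (fun n : ℕ => (((n:ℝ)) ^ (2:ℕ))⁻¹) := by
        simpa using (Real.summable_one_div_nat_pow (p := 2)).mpr le_rfl
      have := (summable_nat_add_iff (f := fun n : ℕ => (((n:ℝ)) ^ (2:ℕ))⁻¹) 1).mpr base
      simpa using this
    refine hs.of_nonneg_of_le (fun n => (Real.exp_pos _).le) (fun n => ?_)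
    have hkey := key ((n:ℝ) + 1) (by linarith [Nat.cast_nonneg (α := ℝ) n])
    have hw : wR ((n:ℤ) + 1) = (n + 1 : ℝ) := by
      rw [show ((n:ℤ) + 1) = ((n + 1 : ℕ) : ℤ) by push_cast; ring]
      exact wR_natCast n
    push_cast
    rw [hw]
    exact hkey
  apply Summable.of_nat_of_neg <;> simpa [wR_neg] using hnat

noncomputable def finsuppInsertEquiv (j : ℤ) (F : Finset ℤ) (hj : j ∉ F) :
    {a : ℤ →₀ ℕ // a.support ⊆ insert j F} ≃ ℕ × {a : ℤ →₀ ℕ // a.support ⊆ F} where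
  toFun x := (x.1 j, ⟨x.1.erase j, by
    intro n hn
    rw [Finsupp.support_erase, Finset.mem_erase] at hn
    rcases Finset.mem_insert.mp (x.2 hn.2) with h | h
    · exact absurd h hn.1
    · exact h⟩)
  invFun p := ⟨p.2.1 + Finsupp.single j p.1, by
    refine (Finsupp.support_add).trans ?_
    apply Finset.union_subset
    · exact fun n hn => Finset.mem_insert_of_mem (p.2.2 hn)
    · exact (Finsupp.support_single_subset).trans (by simp)⟩
  left_inv x := Subtype.ext (Finsupp.erase_add_single j x.1)
  right_inv p := by
    obtain ⟨k, b, hb⟩ := p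
    have hbj : b j = 0 := Finsupp.notMem_support_iff.mp (fun h => hj (hb h))
    have hbe : Finsupp.erase j b = b :=
      Finsupp.erase_of_notMem_support (fun h => hj (hb h))
    refine Prod.ext ?_ (Subtype.ext ?_)
    · show (b + Finsupp.single j k) j = k
      rw [Finsupp.add_apply, Finsupp.single_eq_same, hbj, zero_add]
    · show Finsupp.erase j (b + Finsupp.single j k) = b
      rw [Finsupp.erase_add, Finsupp.erase_single, hbe, add_zero]

lemma finsupp_geom_tsum (Q : ℤ → ℝ≥0∞) (F : Finset ℤ) :
    ∑' x : {a : ℤ →₀ ℕ // a.support ⊆ F}, ∏ n ∈ F, Q n ^ ((x : ℤ →₀ ℕ) n)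
      = ∏ n ∈ F, (1 - Q n)⁻¹ := by
  classical
  induction F using Finset.induction_on with
  | empty =>
    rw [Finset.prod_empty]
    simp only [Finset.prod_empty]
    rw [tsum_eq_single (⟨0, by simp⟩ : {a : ℤ →₀ ℕ // a.support ⊆ (∅ : Finset ℤ)})]
    · intro b hb
      exfalso; apply hb
      ext n
      have := b.2
      simp only [Finset.subset_empty, Finsupp.support_eq_empty] at this
      simp [this]
  | @insert j F hj ih =>
    rw [← ((finsuppInsertEquiv j F hj).symm.tsum_eq
      (f := fun x : {a : ℤ →₀ ℕ // a.support ⊆ insert j F} =>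
        ∏ n ∈ insert j F, Q n ^ ((x : ℤ →₀ ℕ) n)))]
    have hterm : ∀ p : ℕ × {a : ℤ →₀ ℕ // a.support ⊆ F},
        (∏ n ∈ insert j F, Q n ^ (((finsuppInsertEquiv j F hj).symm p : ℤ →₀ ℕ) n))
          = Q j ^ p.1 * ∏ n ∈ F, Q n ^ ((p.2 : ℤ →₀ ℕ) n) := by
      rintro ⟨k, b, hb⟩
      have hbj : b j = 0 := Finsupp.notMem_support_iff.mp (fun h => hj (hb h))
      rw [Finset.prod_insert hj]
      congr 1
      · show Q j ^ ((b + Finsupp.single j k) j) = Q j ^ k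
        rw [Finsupp.add_apply, Finsupp.single_eq_same, hbj, zero_add]
      · refine Finset.prod_congr rfl (fun n hn => ?_)
        have hnj : n ≠ j := fun h => hj (h ▸ hn)
        show Q n ^ ((b + Finsupp.single j k) n) = Q n ^ (b n)
        rw [Finsupp.add_apply, Finsupp.single_eq_of_ne hnj, add_zero]
    simp only [hterm]
    rw [ENNReal.tsum_prod']
    simp only [ENNReal.tsum_mul_left]
    rw [ENNReal.tsum_mul_right, ENNReal.tsum_geometric, Finset.prod_insert hj, ih]

theorem stmt11 (θ r ρ ε : ℝ) (hθ : θ ∈ Set.Ioo (0:ℝ) 1) (hr : 0 < r)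
    (hρ : 0 < ρ) (hρr : ρ ≤ r / 2) (hε : 0 ≤ ε)
    (c : (ℤ →₀ ℕ) → ℝ)
    (hc : ∀ a : ℤ →₀ ℕ, 0 ≤ c a ∧
      c a ≤ ε * Real.exp (2 * ρ * ∑ n ∈ a.support, (a n : ℝ) * wR n ^ θ))
    (I : ℤ → ℝ) (hI : ∀ n : ℤ, 0 ≤ I n ∧ I n ≤ Real.exp (-(2 * r) * wR n ^ θ)) :
    Multipliable (fun n : ℤ => (1 - Real.exp (-r * wR n ^ θ))⁻¹) ∧
    (∑' a : ℤ →₀ ℕ, ENNReal.ofReal (c a * ∏ n ∈ a.support, I n ^ a n))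
      ≤ ENNReal.ofReal (ε * ∏' n : ℤ, (1 - Real.exp (-r * wR n ^ θ))⁻¹) := by
  classical
  obtain ⟨hθ0, hθ1⟩ := hθ
  set q : ℤ → ℝ := fun n => Real.exp (-r * wR n ^ θ) with hq
  have hq_pos : ∀ n, 0 < q n := fun n => Real.exp_pos _
  have hw1 : ∀ n, (1:ℝ) ≤ wR n ^ θ := fun n => Real.one_le_rpow (wR_one_le n) hθ0.le
  have hq_le : ∀ n, q n ≤ Real.exp (-r) := fun n =>
    Real.exp_le_exp.mpr (by nlinarith [hw1 n])
  have hexp_lt1 : Real.exp (-r) < 1 := Real.exp_lt_one_iff.mpr (by linarith)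
  have h1q_pos : ∀ n, 0 < 1 - q n := fun n => by linarith [hq_le n]
  have hq_sum : Summable q := summable_q hr hθ0
  set L : ℤ → ℝ := fun n => Real.log ((1 - q n)⁻¹) with hL
  have hM_pos : ∀ n, (0:ℝ) < (1 - q n)⁻¹ := fun n => inv_pos.mpr (h1q_pos n)
  have hM_one_le : ∀ n, (1:ℝ) ≤ (1 - q n)⁻¹ := fun n =>
    one_le_inv_iff₀.mpr ⟨h1q_pos n, by linarith [(hq_pos n)]⟩
  have hL_nonneg : ∀ n, 0 ≤ L n := fun n => Real.log_nonneg (hM_one_le n)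
  have hL_sum : Summable L := by
    refine (hq_sum.mul_right (1 - Real.exp (-r))⁻¹).of_nonneg_of_le hL_nonneg (fun n => ?_)
    have h1 : L n ≤ (1 - q n)⁻¹ - 1 := Real.log_le_sub_one_of_pos (hM_pos n)
    have h2 : (1 - q n)⁻¹ - 1 = q n * (1 - q n)⁻¹ := by
      have hne : (1 - q n) ≠ 0 := ne_of_gt (h1q_pos n)
      field_simp
      ring
    have h3 : (1 - q n)⁻¹ ≤ (1 - Real.exp (-r))⁻¹ := by
      apply inv_anti₀ (by linarith) (by linarith [hq_le n])
    calc L n ≤ q n * (1 - q n)⁻¹ := by rw [← h2]; exact h1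
      _ ≤ q n * (1 - Real.exp (-r))⁻¹ :=
          mul_le_mul_of_nonneg_left h3 (hq_pos n).le
  have hMult : Multipliable (fun n : ℤ => (1 - q n)⁻¹) :=
    Real.multipliable_of_summable_log (f := fun n => (1 - q n)⁻¹)
      hM_pos hL_sum
  have hP : ∏' n : ℤ, (1 - q n)⁻¹ = Real.exp (∑' n, L n) :=
    (Real.rexp_tsum_eq_tprod (f := fun n => (1 - q n)⁻¹)
      hM_pos hL_sum).symm
  set P : ℝ := ∏' n : ℤ, (1 - q n)⁻¹ with hPdef
  have hprod_le : ∀ F : Finset ℤ, ∏ n ∈ F, (1 - q n)⁻¹ ≤ P := by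
    intro F
    have he : ∏ n ∈ F, (1 - q n)⁻¹ = Real.exp (∑ n ∈ F, L n) := by
      rw [Real.exp_sum]
      exact Finset.prod_congr rfl fun n _ => (Real.exp_log (hM_pos n)).symm
    rw [he, hP]
    exact Real.exp_le_exp.mpr (Summable.sum_le_tsum F (fun n _ => hL_nonneg n) hL_sum)
  refine ⟨hMult, ?_⟩
  -- pointwise bound
  have key_a : ∀ a : ℤ →₀ ℕ, c a * ∏ n ∈ a.support, I n ^ a n
      ≤ ε * ∏ n ∈ a.support, q n ^ a n := by
    intro a
    set S := ∑ n ∈ a.support, (a n : ℝ) * wR n ^ θ with hSdef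
    have hS0 : 0 ≤ S := Finset.sum_nonneg fun n _ =>
      mul_nonneg (Nat.cast_nonneg _) (by linarith [hw1 n])
    have hprodI_nonneg : 0 ≤ ∏ n ∈ a.support, I n ^ a n :=
      Finset.prod_nonneg fun n _ => pow_nonneg (hI n).1 _
    have hprod_I : ∏ n ∈ a.support, I n ^ a n ≤ Real.exp (-(2 * r) * S) := by
      calc ∏ n ∈ a.support, I n ^ a n
          ≤ ∏ n ∈ a.support, Real.exp (-(2 * r) * wR n ^ θ) ^ a n :=
            Finset.prod_le_prod (fun n _ => pow_nonneg (hI n).1 _)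
              (fun n _ => pow_le_pow_left₀ (hI n).1 (hI n).2 _)
        _ = Real.exp (∑ n ∈ a.support, (a n : ℝ) * (-(2 * r) * wR n ^ θ)) := by
            rw [Real.exp_sum]
            exact Finset.prod_congr rfl fun n _ => by
              rw [← Real.exp_nat_mul]
        _ = Real.exp (-(2 * r) * S) := by
            rw [hSdef, Finset.mul_sum]
            congr 1
            exact Finset.sum_congr rfl fun n _ => by ring
    have hqprod : ε * Real.exp (-r * S) = ε * ∏ n ∈ a.support, q n ^ a n := by
      congr 1
      rw [hq]
      calc Real.exp (-r * S)
          = Real.exp (∑ n ∈ a.support, (a n : ℝ) * (-r * wR n ^ θ)) := by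
            rw [hSdef, Finset.mul_sum]
            congr 1
            exact Finset.sum_congr rfl fun n _ => by ring
        _ = ∏ n ∈ a.support, Real.exp (-r * wR n ^ θ) ^ a n := by
            rw [Real.exp_sum]
            exact Finset.prod_congr rfl fun n _ => by rw [← Real.exp_nat_mul]
    calc c a * ∏ n ∈ a.support, I n ^ a n
        ≤ (ε * Real.exp (2 * ρ * S)) * Real.exp (-(2 * r) * S) := by
          apply mul_le_mul (hc a).2 hprod_I hprodI_nonneg (by positivity)
      _ = ε * Real.exp ((2 * ρ - 2 * r) * S) := by
          rw [mul_assoc, ← Real.exp_add]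
          congr 2
          ring
      _ ≤ ε * Real.exp (-r * S) := by
          apply mul_le_mul_of_nonneg_left _ hε
          exact Real.exp_le_exp.mpr (by nlinarith)
      _ = ε * ∏ n ∈ a.support, q n ^ a n := hqprod
  -- pass to ENNReal
  set Qe : ℤ → ℝ≥0∞ := fun n => ENNReal.ofReal (q n) with hQe
  have step1 : (∑' a : ℤ →₀ ℕ, ENNReal.ofReal (c a * ∏ n ∈ a.support, I n ^ a n))
      ≤ ENNReal.ofReal ε * ∑' a : ℤ →₀ ℕ, ∏ n ∈ a.support, Qe n ^ a n := by
    rw [← ENNReal.tsum_mul_left]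
    refine ENNReal.tsum_le_tsum fun a => ?_
    calc ENNReal.ofReal (c a * ∏ n ∈ a.support, I n ^ a n)
        ≤ ENNReal.ofReal (ε * ∏ n ∈ a.support, q n ^ a n) :=
          ENNReal.ofReal_le_ofReal (key_a a)
      _ = ENNReal.ofReal ε * ENNReal.ofReal (∏ n ∈ a.support, q n ^ a n) :=
          ENNReal.ofReal_mul hε
      _ = ENNReal.ofReal ε * ∏ n ∈ a.support, Qe n ^ a n := by
          congr 1
          rw [ENNReal.ofReal_prod_of_nonneg fun n _ => pow_nonneg (hq_pos n).le _]
          exact Finset.prod_congr rfl fun n _ => ENNReal.ofReal_pow (hq_pos n).le _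
  have hQinv : ∀ n : ℤ, (1 - Qe n)⁻¹ = ENNReal.ofReal ((1 - q n)⁻¹) := by
    intro n
    have h1 : (1 : ℝ≥0∞) - Qe n = ENNReal.ofReal (1 - q n) := by
      rw [hQe, ENNReal.ofReal_sub 1 (hq_pos n).le, ENNReal.ofReal_one]
    rw [h1, ← ENNReal.ofReal_inv_of_pos (h1q_pos n)]
  have step2 : (∑' a : ℤ →₀ ℕ, ∏ n ∈ a.support, Qe n ^ a n) ≤ ENNReal.ofReal P := by
    refine Summable.tsum_le_of_sum_le ENNReal.summable fun s => ?_
    set F : Finset ℤ := s.sup Finsupp.support with hF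
    have hsup : ∀ a ∈ s, a.support ⊆ F := fun a ha => Finset.le_sup ha
    have e1 : ∑ a ∈ s, ∏ n ∈ a.support, Qe n ^ a n
        = ∑ a ∈ s, ∏ n ∈ F, Qe n ^ a n := by
      refine Finset.sum_congr rfl fun a ha => ?_
      exact Finset.prod_subset (hsup a ha) fun n _ hnot => by
        rw [Finsupp.notMem_support_iff.mp hnot, pow_zero]
    have e2 : ∑ a ∈ s, ∏ n ∈ F, Qe n ^ a n
        ≤ ∑' x : {a : ℤ →₀ ℕ // a.support ⊆ F}, ∏ n ∈ F, Qe n ^ ((x : ℤ →₀ ℕ) n) := by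
      have hfil : s.filter (fun a : ℤ →₀ ℕ => a.support ⊆ F) = s :=
        Finset.filter_true_of_mem hsup
      rw [← hfil, ← Finset.sum_subtype_eq_sum_filter]
      exact ENNReal.sum_le_tsum _
    have e3 : (∑' x : {a : ℤ →₀ ℕ // a.support ⊆ F}, ∏ n ∈ F, Qe n ^ ((x : ℤ →₀ ℕ) n))
        = ∏ n ∈ F, (1 - Qe n)⁻¹ := finsupp_geom_tsum Qe F
    have e4 : ∏ n ∈ F, (1 - Qe n)⁻¹ ≤ ENNReal.ofReal P := by
      have : ∏ n ∈ F, (1 - Qe n)⁻¹ = ENNReal.ofReal (∏ n ∈ F, (1 - q n)⁻¹) := by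
        rw [ENNReal.ofReal_prod_of_nonneg fun n _ => (hM_pos n).le]
        exact Finset.prod_congr rfl fun n _ => hQinv n
      rw [this]
      exact ENNReal.ofReal_le_ofReal (hprod_le F)
    calc ∑ a ∈ s, ∏ n ∈ a.support, Qe n ^ a n
        = ∑ a ∈ s, ∏ n ∈ F, Qe n ^ a n := e1
      _ ≤ _ := e2
      _ = ∏ n ∈ F, (1 - Qe n)⁻¹ := e3
      _ ≤ ENNReal.ofReal P := e4
  calc (∑' a : ℤ →₀ ℕ, ENNReal.ofReal (c a * ∏ n ∈ a.support, I n ^ a n))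
      ≤ ENNReal.ofReal ε * ∑' a : ℤ →₀ ℕ, ∏ n ∈ a.support, Qe n ^ a n := step1
    _ ≤ ENNReal.ofReal ε * ENNReal.ofReal P := mul_le_mul_right step2 _
    _ = ENNReal.ofReal (ε * P) := (ENNReal.ofReal_mul hε).symm
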